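/- For every n ≥ k ≥ 1, every skew-Hermitian matrix X ∈ ℂ^{n×n} (X† = −X), and every Ψ ∈ ℂ^{n×k} with Ψ†Ψ = 1_k, one has ‖exp(X)·Ψ − Ψ‖_F ≤ ‖X‖_F. Equivalently, with chordal distance d = ‖exp(X)Ψ − Ψ‖_F and geodesic quantity r = (1/√2)‖X‖_F on the complex Stiefel manifold, (1/√2)·d ≤ r. -/

import Mathlib

open Matrix

/-- The Frobenius norm of a complex matrix. -/
noncomputable def frobNorm {m n : Type*} [Fintype m] [Fintype n]
    (M : Matrix m n ℂ) : ℝ :=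
  Real.sqrt (∑ i, ∑ j, ‖M i j‖ ^ 2)

section Aux

attribute [local instance] Matrix.frobeniusSeminormedAddCommGroup
  Matrix.frobeniusNormedAddCommGroup Matrix.frobeniusNormedSpace
  Matrix.frobeniusNormedRing Matrix.frobeniusNormedAlgebra

open NormedSpace

variable {a b : Type*} [Fintype a] [Fintype b]

lemma frobNorm_eq (M : Matrix a b ℂ) : frobNorm M = ‖M‖ := by
  rw [frobNorm, Matrix.frobenius_norm_def, Real.sqrt_eq_rpow]
  congr 1
  refine Finset.sum_congr rfl fun i _ => Finset.sum_congr rfl fun j _ => ?_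
  rw [← Real.rpow_natCast (‖M i j‖) 2]
  norm_num

lemma frob_sq_eq (M : Matrix a b ℂ) : ‖M‖ ^ 2 = (Matrix.trace (Mᴴ * M)).re := by
  have h1 : (Matrix.trace (Mᴴ * M)).re = ∑ j, ∑ i, ‖M i j‖ ^ 2 := by
    rw [Matrix.trace]
    rw [Complex.re_sum]
    refine Finset.sum_congr rfl fun j _ => ?_
    rw [Matrix.diag_apply, Matrix.mul_apply, Complex.re_sum]
    refine Finset.sum_congr rfl fun i _ => ?_
    rw [Matrix.conjTranspose_apply]
    have : star (M i j) * M i j = (Complex.normSq (M i j) : ℂ) := by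
      simpa using (Complex.normSq_eq_conj_mul_self (z := M i j)).symm
    rw [this, Complex.ofReal_re, Complex.normSq_eq_norm_sq]
  have h2 : ‖M‖ = frobNorm M := (frobNorm_eq M).symm
  rw [h1, h2, frobNorm, Real.sq_sqrt (by positivity), Finset.sum_comm]

lemma retrace_nonneg (M : Matrix a b ℂ) : 0 ≤ (Matrix.trace (Mᴴ * M)).re := by
  rw [← frob_sq_eq]; positivity

lemma norm_unitary_mul [DecidableEq a] (U : Matrix a a ℂ) (hU : Uᴴ * U = 1)
    (M : Matrix a b ℂ) : ‖U * M‖ = ‖M‖ := by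
  have hsq : ‖U * M‖ ^ 2 = ‖M‖ ^ 2 := by
    rw [frob_sq_eq, frob_sq_eq, Matrix.conjTranspose_mul]
    congr 2
    calc Mᴴ * Uᴴ * (U * M) = Mᴴ * (Uᴴ * U) * M := by
          rw [Matrix.mul_assoc, Matrix.mul_assoc, Matrix.mul_assoc]
    _ = Mᴴ * M := by rw [hU, Matrix.mul_one]
  calc ‖U * M‖ = Real.sqrt (‖U * M‖ ^ 2) := (Real.sqrt_sq (norm_nonneg _)).symm
  _ = Real.sqrt (‖M‖ ^ 2) := by rw [hsq]
  _ = ‖M‖ := Real.sqrt_sq (norm_nonneg _)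

lemma norm_mul_isometry_le [DecidableEq a] [DecidableEq b]
    (X : Matrix a a ℂ) (Ψ : Matrix a b ℂ) (hΨ : Ψᴴ * Ψ = 1) : ‖X * Ψ‖ ≤ ‖X‖ := by
  set P : Matrix a a ℂ := Ψ * Ψᴴ with hP
  have hPP : P * P = P := by
    rw [hP]
    calc Ψ * Ψᴴ * (Ψ * Ψᴴ) = Ψ * (Ψᴴ * Ψ) * Ψᴴ := by
          rw [Matrix.mul_assoc, Matrix.mul_assoc, Matrix.mul_assoc]
    _ = Ψ * Ψᴴ := by rw [hΨ, Matrix.mul_one]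
  have hPH : Pᴴ = P := by rw [hP, Matrix.conjTranspose_mul, Matrix.conjTranspose_conjTranspose]
  have hQQ : (1 - P) * (1 - P) = 1 - P := by
    have : (1 - P) * (1 - P) = 1 - P - P + P * P := by noncomm_ring
    rw [this, hPP]; abel
  have hQH : (1 - P)ᴴ = 1 - P := by
    rw [Matrix.conjTranspose_sub, hPH, Matrix.conjTranspose_one]
  have hsq : ‖X * Ψ‖ ^ 2 ≤ ‖X‖ ^ 2 := by
    rw [frob_sq_eq, frob_sq_eq]
    have h1 : Matrix.trace ((X * Ψ)ᴴ * (X * Ψ)) = Matrix.trace (Xᴴ * X * P) := by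
      rw [Matrix.conjTranspose_mul]
      calc Matrix.trace (Ψᴴ * Xᴴ * (X * Ψ)) = Matrix.trace (Ψᴴ * (Xᴴ * X * Ψ)) := by
            rw [Matrix.mul_assoc, Matrix.mul_assoc]
      _ = Matrix.trace ((Xᴴ * X * Ψ) * Ψᴴ) := Matrix.trace_mul_comm _ _
      _ = Matrix.trace (Xᴴ * X * P) := by rw [hP, Matrix.mul_assoc, Matrix.mul_assoc]
    have h2 : Matrix.trace (Xᴴ * X) - Matrix.trace (Xᴴ * X * P)
        = Matrix.trace ((X * (1 - P))ᴴ * (X * (1 - P))) := by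
      rw [Matrix.conjTranspose_mul, hQH]
      calc Matrix.trace (Xᴴ * X) - Matrix.trace (Xᴴ * X * P)
          = Matrix.trace (Xᴴ * X * (1 - P)) := by
            rw [← Matrix.trace_sub]; congr 1; noncomm_ring
      _ = Matrix.trace (Xᴴ * X * ((1 - P) * (1 - P))) := by rw [hQQ]
      _ = Matrix.trace ((Xᴴ * X * (1 - P)) * (1 - P)) := by noncomm_ring
      _ = Matrix.trace ((1 - P) * (Xᴴ * X * (1 - P))) := (Matrix.trace_mul_comm _ _).symm
      _ = Matrix.trace ((1 - P) * Xᴴ * (X * (1 - P))) := by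
            rw [Matrix.mul_assoc, Matrix.mul_assoc]
    have h3 : 0 ≤ (Matrix.trace ((X * (1 - P))ᴴ * (X * (1 - P)))).re :=
      retrace_nonneg _
    rw [h1]
    have := congrArg Complex.re h2
    rw [Complex.sub_re] at this
    linarith
  calc ‖X * Ψ‖ = Real.sqrt (‖X * Ψ‖ ^ 2) := (Real.sqrt_sq (norm_nonneg _)).symm
  _ ≤ Real.sqrt (‖X‖ ^ 2) := Real.sqrt_le_sqrt hsq
  _ = ‖X‖ := Real.sqrt_sq (norm_nonneg _)

end Aux

section Main

attribute [local instance] Matrix.frobeniusSeminormedAddCommGroup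
  Matrix.frobeniusNormedAddCommGroup Matrix.frobeniusNormedSpace
  Matrix.frobeniusNormedRing Matrix.frobeniusNormedAlgebra

open NormedSpace intervalIntegral

/-- On the complex Stiefel manifold, the chordal distance is bounded by `√2` times the
geodesic distance: for skew-Hermitian `X` and `Ψ` with `ΨᴴΨ = 1`,
`‖exp(X)Ψ − Ψ‖_F ≤ ‖X‖_F`, i.e. `(1/√2) dᵛ ≤ rᵛ`. -/
theorem stiefel_chordal_le_geodesic (n k : ℕ) (hk : 1 ≤ k) (hkn : k ≤ n)
    (X : Matrix (Fin n) (Fin n) ℂ) (hX : Xᴴ = -X)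
    (Ψ : Matrix (Fin n) (Fin k) ℂ) (hΨ : Ψᴴ * Ψ = 1) :
    frobNorm (NormedSpace.exp X * Ψ - Ψ) ≤ frobNorm X := by
  rw [frobNorm_eq, frobNorm_eq]
  -- the continuous linear map `A ↦ A * Ψ`
  let L : Matrix (Fin n) (Fin n) ℂ →L[ℝ] Matrix (Fin n) (Fin k) ℂ :=
    LinearMap.toContinuousLinearMap
      { toFun := fun A => A * Ψ
        map_add' := fun A B => Matrix.add_mul A B Ψ
        map_smul' := fun c A => Matrix.smul_mul c A Ψ }
  have hL : ∀ A, L A = A * Ψ := fun A => rfl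
  -- derivative
  have hder : ∀ t : ℝ, HasDerivAt (fun u : ℝ => exp (u • X) * Ψ)
      (exp (t • X) * X * Ψ) t := by
    intro t
    have h1 : HasDerivAt (fun u : ℝ => exp (u • X)) (exp (t • X) * X) t :=
      hasDerivAt_exp_smul_const X t
    have h2 := L.hasFDerivAt.comp_hasDerivAt t h1
    exact h2
  -- continuity of the integrand
  have hcont : Continuous fun t : ℝ => exp (t • X) * X * Ψ := by
    have h1 : Continuous fun t : ℝ => exp (t • X) * X :=
      ((exp_continuous.comp ((continuous_id.smul continuous_const) :
        Continuous fun t : ℝ => t • X))).mul continuous_const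
    have := L.continuous.comp h1
    simpa [hL, Function.comp_def] using this
  -- FTC
  have key : ∫ t in (0:ℝ)..1, exp (t • X) * X * Ψ
      = exp ((1:ℝ) • X) * Ψ - exp ((0:ℝ) • X) * Ψ :=
    intervalIntegral.integral_eq_sub_of_hasDerivAt (fun t _ => hder t)
      (hcont.intervalIntegrable 0 1)
  have h0 : exp ((0:ℝ) • X) * Ψ = Ψ := by
    rw [zero_smul, exp_zero, Matrix.one_mul]
  have h1 : exp ((1:ℝ) • X) * Ψ = NormedSpace.exp X * Ψ := by
    rw [one_smul]
  -- each integrand has Frobenius norm ‖X * Ψ‖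
  have hnorm : ∀ t : ℝ, ‖exp (t • X) * X * Ψ‖ = ‖X * Ψ‖ := by
    intro t
    have hskew : (t • X)ᴴ = -(t • X) := by
      rw [Matrix.conjTranspose_smul, hX, smul_neg]
      simp
    have hU : (exp (t • X))ᴴ * exp (t • X) = 1 := by
      rw [← Matrix.exp_conjTranspose, hskew,
        ← Matrix.exp_add_of_commute (-(t • X)) (t • X) ((Commute.refl (t • X)).neg_left)]
      simp
    have := norm_unitary_mul (exp (t • X)) hU (X * Ψ)
    rw [← this, Matrix.mul_assoc]
  have hbound : ‖∫ t in (0:ℝ)..1, exp (t • X) * X * Ψ‖ ≤ ‖X * Ψ‖ * |(1:ℝ) - 0| :=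
    intervalIntegral.norm_integral_le_of_norm_le_const fun t _ => le_of_eq (hnorm t)
  have heq : NormedSpace.exp X * Ψ - Ψ = ∫ t in (0:ℝ)..1, exp (t • X) * X * Ψ := by
    rw [key, h0, h1]
  have hfinal : ‖NormedSpace.exp X * Ψ - Ψ‖ ≤ ‖X * Ψ‖ := by
    rw [heq]
    simpa using hbound
  exact hfinal.trans (norm_mul_isometry_le X Ψ hΨ)

end Main
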